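/- arXiv:1412.1748 — 3 statements merged into one kernel-verified Lean document; each statement's English description precedes it below -/
import Mathlib

section
/- Let X be a completely regular Hausdorff space containing a compact subset K that is not scattered. Then C_c(X) endowed with its weak topology σ(E,E′) is not an ℵ-space. -/
open TopologicalSpace Filter Set

set_option linter.unusedSectionVars false

section CcAuxSection
open Topology

namespace CcAux

variable {X : Type} [TopologicalSpace X] [T2Space X] [CompletelyRegularSpace X]

/-- Evaluation at a point as a continuous linear functional on `C(X, ℝ)`. -/
noncomputable def evalCLM (x : X) : C(X, ℝ) →L[ℝ] ℝ where
  toFun g := g x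
  map_add' := by intro g h; simp
  map_smul' := by intro c g; simp
  cont := continuous_eval_const x

@[simp] lemma evalCLM_apply (x : X) (g : C(X, ℝ)) : evalCLM x g = g x := rfl

/-- a bump function from complete regularity -/
lemma exists_bump (x : X) (Z : Set X) (hZ : IsClosed Z) (hx : x ∉ Z) :
    ∃ b : C(X, ℝ), (∀ y, 0 ≤ b y) ∧ (∀ y, b y ≤ 1) ∧ b x = 1 ∧ ∀ z ∈ Z, b z = 0 := by
  obtain ⟨f, cf, hf0, hf1⟩ := CompletelyRegularSpace.completely_regular x Z hZ hx
  refine ⟨⟨fun y => 1 - (f y : ℝ), by fun_prop⟩, ?_, ?_, ?_, ?_⟩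
  · intro y; simpa using (f y).2.2
  · intro y; have := (f y).2.1; simp only [ContinuousMap.coe_mk]; linarith
  · simp only [ContinuousMap.coe_mk, hf0]; norm_num
  · intro z hz
    have : f z = 1 := hf1 hz
    simp [this]

/-- the clamp function -/
noncomputable def phi : ℝ → ℝ := fun s => max 0 (min 1 (4 * s - 1))

lemma phi_cont : Continuous phi := by
  unfold phi; fun_prop

lemma phi_nonneg (s : ℝ) : 0 ≤ phi s := le_max_left _ _

lemma phi_le_one (s : ℝ) : phi s ≤ 1 := by
  unfold phi
  exact max_le (by norm_num) (min_le_left _ _)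

lemma phi_of_le {s : ℝ} (h : s ≤ 1 / 4) : phi s = 0 := by
  unfold phi
  have : min 1 (4 * s - 1) ≤ 0 := le_trans (min_le_right _ _) (by linarith)
  exact max_eq_left this

lemma phi_of_ge {s : ℝ} (h : 1 / 2 ≤ s) : phi s = 1 := by
  unfold phi
  have : min 1 (4 * s - 1) = 1 := min_eq_left (by linarith)
  rw [this]; exact max_eq_right (by norm_num)

lemma lt_of_phi_ne {s : ℝ} (h : phi s ≠ 0) : 1 / 4 < s := by
  by_contra hc
  exact h (phi_of_le (le_of_not_gt hc))

/-- Every continuous linear functional on `C(X,ℝ)` (compact-open topology) is bounded on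
the set of functions pointwise bounded by 1. -/
lemma dual_bound (L : C(X, ℝ) →L[ℝ] ℝ) :
    ∃ C : ℝ, ∀ h : C(X, ℝ), (∀ x, |h x| ≤ 1) → |L h| ≤ C := by
  by_contra hcon
  push_neg at hcon
  choose h hb hC using hcon
  set g : ℕ → C(X, ℝ) := fun n => (((n : ℝ) + 1)⁻¹) • h ((n : ℝ) + 1) with hg
  have hgt : Tendsto g atTop (𝓝 0) := by
    rw [ContinuousMap.tendsto_iff_forall_isCompact_tendstoUniformlyOn]
    intro K hK
    rw [Metric.tendstoUniformlyOn_iff]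
    intro ε hε
    obtain ⟨N, hN⟩ := exists_nat_gt (ε⁻¹)
    filter_upwards [eventually_ge_atTop N] with n hn x _
    have hpos : (0 : ℝ) < (n : ℝ) + 1 := by positivity
    have hxb : |h ((n : ℝ) + 1) x| ≤ 1 := hb _ x
    have : |g n x| ≤ ((n : ℝ) + 1)⁻¹ := by
      rw [hg]
      simp only [ContinuousMap.smul_apply, smul_eq_mul, abs_mul, abs_inv]
      rw [abs_of_pos hpos]
      calc ((n : ℝ) + 1)⁻¹ * |h ((n : ℝ) + 1) x| ≤ ((n : ℝ) + 1)⁻¹ * 1 := by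
            exact mul_le_mul_of_nonneg_left hxb (by positivity)
        _ = ((n : ℝ) + 1)⁻¹ := by ring
    have h2 : ((n : ℝ) + 1)⁻¹ < ε := by
      rw [inv_lt_comm₀ hpos hε]
      calc ε⁻¹ < (N : ℝ) := hN
        _ ≤ (n : ℝ) := by exact_mod_cast hn
        _ < (n : ℝ) + 1 := by linarith
    have : |g n x| < ε := lt_of_le_of_lt this h2
    simpa [ContinuousMap.zero_apply, dist_eq_norm, Real.norm_eq_abs, abs_sub_comm] using this
  have hLt : Tendsto (fun n => L (g n)) atTop (𝓝 0) := by
    have := (L.continuous.tendsto 0).comp hgt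
    rw [map_zero] at this
    exact this
  have hbig : ∀ n : ℕ, (1 : ℝ) ≤ |L (g n)| := by
    intro n
    have hpos : (0 : ℝ) < (n : ℝ) + 1 := by positivity
    have hLg : L (g n) = ((n : ℝ) + 1)⁻¹ * L (h ((n : ℝ) + 1)) := by
      rw [hg]; simp
    have h1 : ((n : ℝ) + 1) ≤ |L (h ((n : ℝ) + 1))| := le_of_lt (hC _)
    rw [hLg, abs_mul, abs_inv, abs_of_pos hpos]
    calc (1 : ℝ) = ((n : ℝ) + 1)⁻¹ * ((n : ℝ) + 1) := by field_simp
      _ ≤ ((n : ℝ) + 1)⁻¹ * |L (h ((n : ℝ) + 1))| :=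
          mul_le_mul_of_nonneg_left h1 (by positivity)
  rw [Metric.tendsto_atTop] at hLt
  obtain ⟨N, hN⟩ := hLt 1 one_pos
  have := hN N le_rfl
  rw [dist_zero_right, Real.norm_eq_abs] at this
  exact absurd this (not_lt.mpr (hbig N))

section weaknull

lemma eval_tendsto_zero (a : ℕ → C(X, ℝ)) (hb : ∀ j x, |a j x| ≤ 1)
    (hd : ∀ j j', j ≠ j' → ∀ x, a j x = 0 ∨ a j' x = 0) (L : C(X, ℝ) →L[ℝ] ℝ) :
    Tendsto (fun j => L (a j)) atTop (𝓝 0) := by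
  obtain ⟨C, hC⟩ := dual_bound L
  have hfin : ∀ ε : ℝ, 0 < ε → {j : ℕ | ε ≤ |L (a j)|}.Finite := by
    intro ε hε
    by_contra hinf
    replace hinf : {j : ℕ | ε ≤ |L (a j)|}.Infinite := hinf
    obtain ⟨n, hn⟩ := exists_nat_gt (C / ε)
    obtain ⟨s, hs, hcard⟩ := hinf.exists_subset_card_eq n
    set e : ℕ → ℝ := fun j => if 0 ≤ L (a j) then (1 : ℝ) else -1 with he
    set H : C(X, ℝ) := ∑ j ∈ s, e j • a j with hH
    have hHb : ∀ x, |H x| ≤ 1 := by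
      intro x
      have hHx : H x = ∑ j ∈ s, e j * a j x := by
        rw [hH]; simp
      by_cases hz : ∀ j ∈ s, a j x = 0
      · rw [hHx, Finset.sum_eq_zero (fun j hj => by rw [hz j hj, mul_zero])]
        norm_num
      · push_neg at hz
        obtain ⟨j₀, hj₀, hj₀ne⟩ := hz
        have : H x = e j₀ * a j₀ x := by
          rw [hHx]
          apply Finset.sum_eq_single_of_mem j₀ hj₀
          intro j hj hne
          rcases hd j j₀ hne x with h | h
          · rw [h, mul_zero]
          · exact absurd h hj₀ne
        rw [this, abs_mul]
        have : |e j₀| = 1 := by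
          rw [he]; dsimp only; split <;> norm_num
        rw [this, one_mul]; exact hb _ _
    have hLH : L H = ∑ j ∈ s, |L (a j)| := by
      rw [hH, map_sum]
      apply Finset.sum_congr rfl
      intro j hj
      rw [map_smul]
      rw [he]; dsimp only
      split
      · rw [smul_eq_mul, one_mul, abs_of_nonneg]; assumption
      · rw [smul_eq_mul, neg_one_mul, abs_of_neg]; linarith [not_le.mp (by assumption)]
    have hge : (n : ℝ) * ε ≤ L H := by
      rw [hLH, ← hcard]
      calc (s.card : ℝ) * ε = ∑ _j ∈ s, ε := by rw [Finset.sum_const, nsmul_eq_mul]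
        _ ≤ ∑ j ∈ s, |L (a j)| := Finset.sum_le_sum (fun j hj => hs hj)
    have hle : |L H| ≤ C := hC H hHb
    have : (n : ℝ) * ε ≤ C := le_trans hge (le_trans (le_abs_self _) hle)
    rw [div_lt_iff₀ hε] at hn
    linarith
  rw [Metric.tendsto_atTop]
  intro ε hε
  have hf := hfin (ε / 2) (by positivity)
  obtain ⟨N, hN⟩ := hf.bddAbove
  refine ⟨N + 1, fun n hn => ?_⟩
  rw [dist_zero_right, Real.norm_eq_abs]
  by_contra hcon
  push_neg at hcon
  have : n ∈ {j : ℕ | ε / 2 ≤ |L (a j)|} := by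
    simp only [Set.mem_setOf_eq]; linarith
  have := hN this
  omega

/-- the identity map into the weak space -/
def tw (g : C(X, ℝ)) : WeakSpace ℝ C(X, ℝ) := g

lemma pairing_injective :
    Function.Injective ((topDualPairing ℝ C(X, ℝ)).flip) := by
  intro g g' hgg
  have : ∀ Lf : C(X, ℝ) →L[ℝ] ℝ, Lf g = Lf g' := by
    intro Lf
    exact congrArg (fun m => m Lf) hgg
  ext x
  exact this (evalCLM x)

lemma tendsto_weak_zero (a : ℕ → C(X, ℝ))
    (h : ∀ L : C(X, ℝ) →L[ℝ] ℝ, Tendsto (fun j => L (a j)) atTop (𝓝 0)) :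
    Tendsto (fun j => tw (a j)) atTop (𝓝 (0 : WeakSpace ℝ C(X, ℝ))) := by
  refine (WeakBilin.tendsto_iff_forall_eval_tendsto _ pairing_injective).mpr ?_
  intro L
  have h0 : Tendsto (fun j => L (a j)) atTop (𝓝 (L 0)) := by
    rw [L.map_zero]; exact h L
  exact h0

end weaknull

section tree

variable {T : Set X}

/-- A nonempty set with no relatively isolated points. -/
def Crowded (T : Set X) : Prop :=
  ∀ x ∈ T, ∀ U : Set X, IsOpen U → x ∈ U → ∃ y, y ∈ U ∩ T ∧ y ≠ x

structure NodeData (T : Set X) where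
  f : C(X, ℝ)
  p : X
  hp : p ∈ T
  hfp : f p = 1
  h0 : ∀ x, 0 ≤ f x
  h1 : ∀ x, f x ≤ 1

lemma exists_children (hT : Crowded T) (d : NodeData T) :
    ∃ c : NodeData T × NodeData T,
      (∀ x, d.f x ≤ 1 / 2 → c.1.f x = 0) ∧ (∀ x, d.f x ≤ 1 / 2 → c.2.f x = 0) ∧
      (∀ x, 1 / 4 ≤ c.1.f x → c.2.f x = 0) := by
  classical
  set O : Set X := {x | 1 / 2 < d.f x} with hO
  have hOopen : IsOpen O := isOpen_lt continuous_const d.f.continuous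
  have hpO : d.p ∈ O := by
    simp only [hO, Set.mem_setOf_eq, d.hfp]; norm_num
  obtain ⟨q, ⟨hqO, hqT⟩, hqp⟩ := hT d.p d.hp O hOopen hpO
  obtain ⟨Wq, Wp, hWqo, hWpo, hqWq, hpWp, hdisj⟩ := t2_separation hqp
  -- bump at p
  have hZ0closed : IsClosed ({x | d.f x ≤ 1 / 2} ∪ Wpᶜ) :=
    (isClosed_le d.f.continuous continuous_const).union (hWpo.isClosed_compl)
  have hpZ0 : d.p ∉ ({x | d.f x ≤ 1 / 2} ∪ Wpᶜ) := by
    rintro (hp1 | hp2)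
    · simp only [Set.mem_setOf_eq, d.hfp] at hp1; norm_num at hp1
    · exact hp2 (by simpa using hpWp)
  obtain ⟨b0, hb00, hb01, hb0p, hb0z⟩ := exists_bump d.p _ hZ0closed hpZ0
  -- bump at q
  have hZ1closed : IsClosed (({x | d.f x ≤ 1 / 2} ∪ Wqᶜ) ∪ {x | 1 / 4 ≤ b0 x}) :=
    (((isClosed_le d.f.continuous continuous_const).union hWqo.isClosed_compl).union
      (isClosed_le continuous_const b0.continuous))
  have hqZ1 : q ∉ (({x | d.f x ≤ 1 / 2} ∪ Wqᶜ) ∪ {x | 1 / 4 ≤ b0 x}) := by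
    rintro ((hq1 | hq2) | hq3)
    · simp only [Set.mem_setOf_eq] at hq1
      simp only [hO, Set.mem_setOf_eq] at hqO
      linarith
    · exact hq2 (by simpa using hqWq)
    · have hqWpc : q ∈ Wpᶜ := by
        intro hq
        exact (Set.disjoint_left.mp hdisj hqWq) hq
      have : b0 q = 0 := hb0z q (Or.inr hqWpc)
      simp only [Set.mem_setOf_eq, this] at hq3
      norm_num at hq3
  obtain ⟨b1, hb10, hb11, hb1q, hb1z⟩ := exists_bump q _ hZ1closed hqZ1
  refine ⟨⟨⟨b0, d.p, d.hp, hb0p, hb00, hb01⟩, ⟨b1, q, hqT, hb1q, hb10, hb11⟩⟩, ?_, ?_, ?_⟩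
  · intro x hx
    exact hb0z x (Or.inl hx)
  · intro x hx
    exact hb1z x (Or.inl (Or.inl hx))
  · intro x hx
    exact hb1z x (Or.inr hx)

variable (hT : Crowded T) (t0 : T.Nonempty)

noncomputable def rootData : NodeData T :=
  ⟨ContinuousMap.const X 1, t0.choose, t0.choose_spec, rfl, fun _ => zero_le_one,
    fun _ => le_refl 1⟩

noncomputable def children (d : NodeData T) : NodeData T × NodeData T :=
  (exists_children hT d).choose

lemma children_spec₁ (d : NodeData T) :
    ∀ x, d.f x ≤ 1 / 2 → (children hT d).1.f x = 0 :=
  (exists_children hT d).choose_spec.1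

lemma children_spec₂ (d : NodeData T) :
    ∀ x, d.f x ≤ 1 / 2 → (children hT d).2.f x = 0 :=
  (exists_children hT d).choose_spec.2.1

lemma children_spec₃ (d : NodeData T) :
    ∀ x, 1 / 4 ≤ (children hT d).1.f x → (children hT d).2.f x = 0 :=
  (exists_children hT d).choose_spec.2.2

noncomputable def nodeB : ℕ → (ℕ → Bool) → NodeData T
  | 0, _ => rootData t0
  | (k + 1), u =>
      if u k then (children hT (nodeB k u)).2 else (children hT (nodeB k u)).1

lemma nodeB_congr : ∀ (k : ℕ) {u v : ℕ → Bool}, (∀ i < k, u i = v i) →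
    nodeB hT t0 k u = nodeB hT t0 k v := by
  intro k
  induction k with
  | zero => intro u v _; rfl
  | succ k ih =>
      intro u v h
      have h1 : nodeB hT t0 k u = nodeB hT t0 k v := ih (fun i hi => h i (Nat.lt_succ_of_lt hi))
      have h2 : u k = v k := h k (Nat.lt_succ_self k)
      simp only [nodeB, h1, h2]

/-- (R1): a child vanishes where the parent is ≤ 1/2 -/
lemma nodeB_child_vanish (k : ℕ) (u : ℕ → Bool) (x : X)
    (h : (nodeB hT t0 k u).f x ≤ 1 / 2) : (nodeB hT t0 (k + 1) u).f x = 0 := by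
  simp only [nodeB]
  cases hu : u k
  · simp only [Bool.false_eq_true, if_false]
    exact children_spec₁ hT _ x h
  · simp only [if_true]
    exact children_spec₂ hT _ x h

/-- contrapositive form -/
lemma nodeB_parent_big {k : ℕ} {u : ℕ → Bool} {x : X}
    (h : 0 < (nodeB hT t0 (k + 1) u).f x) : 1 / 2 < (nodeB hT t0 k u).f x := by
  by_contra hc
  push_neg at hc
  rw [nodeB_child_vanish hT t0 k u x hc] at h
  exact lt_irrefl 0 h

/-- chain lemma -/
lemma nodeB_chain {k m : ℕ} (hkm : k < m) {u : ℕ → Bool} {x : X}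
    (h : 0 < (nodeB hT t0 m u).f x) : 1 / 2 < (nodeB hT t0 k u).f x := by
  induction m with
  | zero => omega
  | succ m ih =>
      rcases Nat.lt_succ_iff_lt_or_eq.mp hkm with hlt | heq
      · have : 1 / 2 < (nodeB hT t0 m u).f x := nodeB_parent_big hT t0 h
        exact ih hlt (by linarith)
      · subst heq
        exact nodeB_parent_big hT t0 h

/-- (R2): sibling separation, stated via `Function.update`. -/
lemma nodeB_sibling (k : ℕ) (u : ℕ → Bool) (x : X)
    (h : 1 / 4 ≤ (nodeB hT t0 (k + 1) (Function.update u k false)).f x) :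
    (nodeB hT t0 (k + 1) (Function.update u k true)).f x = 0 := by
  have hbase : nodeB hT t0 k (Function.update u k false) = nodeB hT t0 k u :=
    nodeB_congr hT t0 k (fun i hi => Function.update_of_ne (Nat.ne_of_lt hi) _ _)
  have hbase' : nodeB hT t0 k (Function.update u k true) = nodeB hT t0 k u :=
    nodeB_congr hT t0 k (fun i hi => Function.update_of_ne (Nat.ne_of_lt hi) _ _)
  have e1 : nodeB hT t0 (k + 1) (Function.update u k false)
      = (children hT (nodeB hT t0 k u)).1 := by
    simp only [nodeB, Function.update_self, Bool.false_eq_true, if_false, hbase]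
  have e2 : nodeB hT t0 (k + 1) (Function.update u k true)
      = (children hT (nodeB hT t0 k u)).2 := by
    simp only [nodeB, Function.update_self, if_true, hbase']
  rw [e1] at h
  rw [e2]
  exact children_spec₃ hT _ x h

end tree

section xstar

variable {T : Set X} (hT : Crowded T) (t0 : T.Nonempty)
lemma exists_xstar {K : Set X} (hK : IsCompact K) (hTK : T ⊆ K) (u : ℕ → Bool) :
    ∃ x : X, ∀ k, x ∈ closure {y | 1 / 2 < (nodeB hT t0 k u).f y} := by
  set t : ℕ → Set X := fun k => closure {y | 1 / 2 < (nodeB hT t0 k u).f y} ∩ K with ht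
  have hnested : ∀ k, t (k + 1) ⊆ t k := by
    intro k
    apply Set.inter_subset_inter_left
    apply closure_mono
    intro y hy
    simp only [Set.mem_setOf_eq] at hy ⊢
    exact nodeB_chain hT t0 (Nat.lt_succ_self k) (by linarith)
  have hne : ∀ k, (t k).Nonempty := by
    intro k
    refine ⟨(nodeB hT t0 k u).p, ?_, hTK (nodeB hT t0 k u).hp⟩
    apply subset_closure
    simp only [Set.mem_setOf_eq, (nodeB hT t0 k u).hfp]
    norm_num
  have hcl : ∀ k, IsClosed (t k) := fun k => isClosed_closure.inter hK.isClosed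
  have hcomp : IsCompact (t 0) := hK.inter_left isClosed_closure
  obtain ⟨x, hx⟩ := IsCompact.nonempty_iInter_of_sequence_nonempty_isCompact_isClosed
    t hnested hne hcomp hcl
  refine ⟨x, fun k => ?_⟩
  have := Set.mem_iInter.mp hx k
  exact this.1

variable {xs : X} {u : ℕ → Bool}
variable (hx : ∀ k, xs ∈ closure {y | 1 / 2 < (nodeB hT t0 k u).f y})

/-- (P1): along the branch, values at `xs` are at least 1/2. -/
lemma xstar_branch (hx : ∀ k, xs ∈ closure {y | 1 / 2 < (nodeB hT t0 k u).f y})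
    (k : ℕ) : 1 / 2 ≤ (nodeB hT t0 k u).f xs := by
  have := hx k
  have hsub := closure_lt_subset_le (continuous_const : Continuous fun _ : X => (1:ℝ)/2)
    (nodeB hT t0 k u).f.continuous
  exact hsub this

/-- (P2): off-branch flipped nodes are small at `xs`. -/
lemma xstar_flip (hx : ∀ k, xs ∈ closure {y | 1 / 2 < (nodeB hT t0 k u).f y}) (j : ℕ) :
    (nodeB hT t0 (j + 1) (Function.update u j (!u j))).f xs ≤ 1 / 4 := by
  cases hu : u j
  · -- u j = false ; flipped node is the `true` child
    have h14 : 1 / 4 ≤ (nodeB hT t0 (j + 1) (Function.update u j false)).f xs := by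
      have heq : Function.update u j false = u := by
        rw [← hu]; exact Function.update_eq_self j u
      rw [heq]
      have := xstar_branch hT t0 hx (j + 1)
      linarith
    have hz := nodeB_sibling hT t0 j u xs h14
    simp only [Bool.not_false]
    rw [hz]
    norm_num
  · -- u j = true ; flipped node is the `false` child
    simp only [Bool.not_true]
    have hsub : {y | 1 / 2 < (nodeB hT t0 (j + 1) u).f y}
        ⊆ {y | (nodeB hT t0 (j + 1) (Function.update u j false)).f y < 1 / 4} := by
      intro y hy
      simp only [Set.mem_setOf_eq] at hy ⊢
      by_contra hc
      push_neg at hc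
      have hz := nodeB_sibling hT t0 j u y hc
      have hval : Function.update u j true = u := by
        rw [← hu]; exact Function.update_eq_self j u
      rw [hval] at hz
      rw [hz] at hy
      norm_num at hy
    have hcl : closure {y | 1 / 2 < (nodeB hT t0 (j + 1) u).f y}
        ⊆ {y | (nodeB hT t0 (j + 1) (Function.update u j false)).f y ≤ 1 / 4} := by
      refine le_trans (closure_mono hsub) ?_
      exact closure_lt_subset_le (nodeB hT t0 (j + 1) (Function.update u j false)).f.continuous
        continuous_const
    exact hcl (hx (j + 1))

/-- disjointness of flipped nodes across levels -/
lemma flip_disjoint {j j' : ℕ} (hjj : j < j') (x : X)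
    (h1 : 1 / 4 < (nodeB hT t0 (j + 1) (Function.update u j (!u j))).f x)
    (h2 : 0 < (nodeB hT t0 (j' + 1) (Function.update u j' (!u j'))).f x) : False := by
  have hcongr : nodeB hT t0 (j + 1) (Function.update u j' (!u j'))
      = nodeB hT t0 (j + 1) u := by
    apply nodeB_congr
    intro i hi
    exact Function.update_of_ne (by omega) _ _
  have hu2 : 1 / 2 < (nodeB hT t0 (j + 1) u).f x := by
    have := nodeB_chain hT t0 (show j + 1 < j' + 1 by omega) h2
    rwa [hcongr] at this
  cases hu : u j
  · -- u j = false : flipped j-node is `true` child, branch is `false` child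
    rw [hu] at h1
    simp only [Bool.not_false] at h1
    have hval : Function.update u j false = u := by
      rw [← hu]; exact Function.update_eq_self j u
    have h14 : 1 / 4 ≤ (nodeB hT t0 (j + 1) (Function.update u j false)).f x := by
      rw [hval]; linarith
    have hz := nodeB_sibling hT t0 j u x h14
    rw [hz] at h1
    norm_num at h1
  · -- u j = true : flipped j-node is `false` child
    rw [hu] at h1
    simp only [Bool.not_true] at h1
    have hz := nodeB_sibling hT t0 j u x (le_of_lt h1)
    have hval : Function.update u j true = u := by
      rw [← hu]; exact Function.update_eq_self j u
    rw [hval] at hz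
    rw [hz] at hu2
    norm_num at hu2

/-- the antichain family -/
noncomputable def phiCM : C(ℝ, ℝ) := ⟨phi, phi_cont⟩

noncomputable def gelt (m : ℕ) (v : ℕ → Bool) : C(X, ℝ) :=
  phiCM.comp (nodeB hT t0 m v).f

@[simp] lemma gelt_apply (m : ℕ) (v : ℕ → Bool) (x : X) :
    gelt hT t0 m v x = phi ((nodeB hT t0 m v).f x) := rfl

lemma gelt_congr (m : ℕ) {v v' : ℕ → Bool} (h : ∀ n < m, v n = v' n) :
    gelt hT t0 m v = gelt hT t0 m v' :=
  congrArg (fun d : NodeData T => phiCM.comp d.f) (nodeB_congr hT t0 m h)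

noncomputable def aseq (u : ℕ → Bool) (j : ℕ) : C(X, ℝ) :=
  gelt hT t0 (j + 1) (Function.update u j (!u j))

lemma aseq_bound (j : ℕ) (x : X) : |aseq hT t0 u j x| ≤ 1 := by
  rw [abs_le]
  constructor
  · have := phi_nonneg ((nodeB hT t0 (j + 1) (Function.update u j (!u j))).f x)
    simp only [aseq, gelt_apply]
    linarith
  · exact phi_le_one _

lemma aseq_disjoint (j j' : ℕ) (hne : j ≠ j') (x : X) :
    aseq hT t0 u j x = 0 ∨ aseq hT t0 u j' x = 0 := by
  by_cases h : aseq hT t0 u j x = 0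
  · exact Or.inl h
  · right
    simp only [aseq, gelt_apply] at h ⊢
    have h14 : 1 / 4 < (nodeB hT t0 (j + 1) (Function.update u j (!u j))).f x :=
      lt_of_phi_ne h
    apply phi_of_le
    rcases Nat.lt_or_ge j j' with hlt | hge
    · by_contra hc
      push_neg at hc
      exact flip_disjoint hT t0 hlt x h14 (by linarith)
    · have hlt : j' < j := by omega
      by_contra hc
      push_neg at hc
      have h2 : 0 < (nodeB hT t0 (j + 1) (Function.update u j (!u j))).f x := by linarith
      have h14' : 1 / 4 < (nodeB hT t0 (j' + 1) (Function.update u j' (!u j'))).f x := by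
        linarith
      exact flip_disjoint hT t0 hlt x h14' h2

/-- value of `aseq` at the branch point is 0 -/
lemma aseq_xstar (hx : ∀ k, xs ∈ closure {y | 1 / 2 < (nodeB hT t0 k u).f y}) (j : ℕ) :
    aseq hT t0 u j xs = 0 := by
  simp only [aseq, gelt_apply]
  exact phi_of_le (xstar_flip hT t0 hx j)

/-- value of branch elements at the branch point is 1 -/
lemma gelt_xstar (hx : ∀ k, xs ∈ closure {y | 1 / 2 < (nodeB hT t0 k u).f y}) (m : ℕ) :
    gelt hT t0 m u xs = 1 := by
  simp only [gelt_apply]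
  exact phi_of_ge (xstar_branch hT t0 hx m)

end xstar

section stage

open scoped Classical

variable (P : ℕ → ℕ → (ℕ → Bool) → Prop)

def StCond (i : ℕ) (s : ℕ × (ℕ → Bool)) : Prop :=
  ∃ m, ∃ v : ℕ → Bool, P i m v ∧ ∀ n < min m s.1, v n = s.2 n

noncomputable def stage : ℕ → ℕ × (ℕ → Bool)
  | 0 => (0, fun _ => false)
  | (i + 1) =>
      if h : StCond P i (stage i) then
        (max h.choose (stage i).1 + 1,
          fun n => if n < (stage i).1 then (stage i).2 n else h.choose_spec.choose n)
      else ((stage i).1 + 1, (stage i).2)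

lemma stage_fst_lt (i : ℕ) : (stage P i).1 < (stage P (i + 1)).1 := by
  by_cases h : StCond P i (stage P i)
  · simp only [stage, dif_pos h]
    have := le_max_right h.choose (stage P i).1
    omega
  · simp only [stage, dif_neg h]
    omega

lemma stage_len (i : ℕ) : i ≤ (stage P i).1 := by
  induction i with
  | zero => omega
  | succ i ih => have := stage_fst_lt P i; omega

lemma stage_mono {i j : ℕ} (hij : i ≤ j) : (stage P i).1 ≤ (stage P j).1 := by
  induction j with
  | zero =>
      have h0 : i = 0 := Nat.le_zero.mp hij
      subst h0; exact le_rfl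
  | succ j ih =>
      rcases Nat.lt_succ_iff_lt_or_eq.mp (Nat.lt_succ_of_le hij) with h | h
      · have := stage_fst_lt P j
        have := ih (by omega)
        omega
      · subst h; omega

lemma stage_coh {i j : ℕ} (hij : i ≤ j) {n : ℕ} (hn : n < (stage P i).1) :
    (stage P j).2 n = (stage P i).2 n := by
  induction j with
  | zero =>
      have : i = 0 := by omega
      subst this; rfl
  | succ j ih =>
      rcases Nat.lt_succ_iff_lt_or_eq.mp (Nat.lt_succ_of_le hij) with h | h
      · have hij' : i ≤ j := by omega
        have hn' : n < (stage P j).1 := lt_of_lt_of_le hn (stage_mono P hij')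
        rw [← ih hij']
        by_cases hcnd : StCond P j (stage P j)
        · simp only [stage, dif_pos hcnd, if_pos hn']
        · simp only [stage, dif_neg hcnd]
      · subst h; rfl

/-- the limit branch -/
noncomputable def ustar : ℕ → Bool := fun n => (stage P (n + 1)).2 n

lemma ustar_coh (i : ℕ) {n : ℕ} (hn : n < (stage P i).1) :
    ustar P n = (stage P i).2 n := by
  unfold ustar
  rcases le_or_gt i (n + 1) with h | h
  · exact stage_coh P h hn
  · have hn' : n < (stage P (n + 1)).1 := lt_of_lt_of_le (Nat.lt_succ_self n) (stage_len P _)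
    rw [← stage_coh P (le_of_lt h) hn']

lemma stage_pos_spec (i : ℕ) (h : StCond P i (stage P i)) :
    ∃ m, ∃ v : ℕ → Bool, P i m v ∧ ∀ n < m, v n = ustar P n := by
  refine ⟨h.choose, h.choose_spec.choose, h.choose_spec.choose_spec.1, ?_⟩
  intro n hn
  have hcompat := h.choose_spec.choose_spec.2
  have hlen : n < (stage P (i + 1)).1 := by
    have : (stage P (i + 1)).1 = max h.choose (stage P i).1 + 1 := by
      simp only [stage, dif_pos h]
    rw [this]
    have := le_max_left h.choose (stage P i).1
    omega
  have hval : (stage P (i + 1)).2 n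
      = if n < (stage P i).1 then (stage P i).2 n else h.choose_spec.choose n := by
    simp only [stage, dif_pos h]
  have hustar : ustar P n = (stage P (i + 1)).2 n := ustar_coh P (i + 1) hlen
  rw [hustar, hval]
  by_cases hns : n < (stage P i).1
  · rw [if_pos hns]
    exact hcompat n (lt_min hn hns)
  · rw [if_neg hns]

end stage

end CcAux
end CcAuxSection


/-- A family `N` of subsets of a topological space `X` is a *k-network* if whenever `K ⊆ U`
with `K` compact and `U` open, there is a finite subfamily `F ⊆ N` with `K ⊆ ⋃₀ F ⊆ U`. -/
def IsKNetwork {X : Type*} [TopologicalSpace X] (N : Set (Set X)) : Prop :=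
  ∀ K U : Set X, IsCompact K → IsOpen U → K ⊆ U →
    ∃ F : Set (Set X), F ⊆ N ∧ F.Finite ∧ K ⊆ ⋃₀ F ∧ ⋃₀ F ⊆ U

/-- A family `N` of subsets of `X` is a *network* if for every `x` and every open `U ∋ x`
there is `A ∈ N` with `x ∈ A ⊆ U`. -/
def IsNetwork {X : Type*} [TopologicalSpace X] (N : Set (Set X)) : Prop :=
  ∀ (x : X) (U : Set X), IsOpen U → x ∈ U → ∃ A ∈ N, x ∈ A ∧ A ⊆ U

/-- A family of subsets is *locally finite* if every point has a neighbourhood meeting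
only finitely many of its members. -/
def IsLocallyFiniteFamily {X : Type*} [TopologicalSpace X] (N : Set (Set X)) : Prop :=
  ∀ x : X, ∃ V ∈ nhds x, {A ∈ N | (A ∩ V).Nonempty}.Finite

/-- A family of subsets is *σ-locally finite* if it is a countable union of locally finite
families. -/
def IsSigmaLocallyFinite {X : Type*} [TopologicalSpace X] (N : Set (Set X)) : Prop :=
  ∃ f : ℕ → Set (Set X), (∀ n, IsLocallyFiniteFamily (f n)) ∧ N = ⋃ n, f n

/-- An *ℵ-space* is a regular Hausdorff space with a σ-locally finite k-network. -/
def IsAlephSpace (X : Type*) [TopologicalSpace X] : Prop :=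
  RegularSpace X ∧ T2Space X ∧ ∃ N : Set (Set X), IsSigmaLocallyFinite N ∧ IsKNetwork N

/-- An *ℵ₀-space* is a regular Hausdorff space with a countable k-network. -/
def IsAleph0Space (X : Type*) [TopologicalSpace X] : Prop :=
  RegularSpace X ∧ T2Space X ∧ ∃ N : Set (Set X), N.Countable ∧ IsKNetwork N

/-- A set `S` is *scattered* if every nonempty subset `T ⊆ S` has a point isolated in the
subspace topology of `T`. -/
def IsScattered {X : Type*} [TopologicalSpace X] (S : Set X) : Prop :=
  ∀ T ⊆ S, T.Nonempty → ∃ x ∈ T, ∃ U : Set X, IsOpen U ∧ U ∩ T = {x}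

/-- If a completely regular Hausdorff space `X` contains a non-scattered compact subset,
then `C_c(X)` with its weak topology is not an ℵ-space. -/
theorem cc_weak_not_aleph_of_nonscattered_compact
    (X : Type) [TopologicalSpace X] [T2Space X] [CompletelyRegularSpace X]
    (K : Set X) (hK : IsCompact K) (hKs : ¬ IsScattered K) :
    ¬ IsAlephSpace (WeakSpace ℝ C(X, ℝ)) := by
  classical
  rintro ⟨-, -, N, ⟨fN, hlf, hNU⟩, hkn⟩
  -- extract a crowded subset of K
  rw [IsScattered] at hKs
  push_neg at hKs
  obtain ⟨T, hTK, hTne, hTiso⟩ := hKs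
  have hT : CcAux.Crowded T := by
    intro x hxT U hU hxU
    have hne := hTiso x hxT U hU
    have hsub : {x} ⊆ U ∩ T := by
      intro y hy
      rw [Set.mem_singleton_iff] at hy
      subst hy
      exact ⟨hxU, hxT⟩
    have hss : {x} ⊂ U ∩ T := hsub.ssubset_of_ne (fun h => hne h.symm)
    obtain ⟨y, hyUT, hynx⟩ := Set.exists_of_ssubset hss
    exact ⟨y, hyUT, fun h => hynx (by rw [h]; exact Set.mem_singleton x)⟩
  -- local finiteness data at 0
  have hV : ∀ m, ∃ V ∈ nhds (0 : WeakSpace ℝ C(X, ℝ)),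
      {A ∈ fN m | (A ∩ V).Nonempty}.Finite := fun m => hlf m 0
  choose V hVmem hVfin using hV
  set Fam : Set (Set (WeakSpace ℝ C(X, ℝ))) := ⋃ m, {A ∈ fN m | (A ∩ V m).Nonempty} with hFam
  have hFamCnt : Fam.Countable := Set.countable_iUnion (fun m => (hVfin m).countable)
  obtain ⟨e, he⟩ : ∃ e : ℕ → Set (WeakSpace ℝ C(X, ℝ)), ∀ A ∈ Fam, ∃ i, e i = A := by
    rcases Set.eq_empty_or_nonempty Fam with h | h
    · exact ⟨fun _ => ∅, by simp [h]⟩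
    · obtain ⟨g, hg⟩ := hFamCnt.exists_eq_range h
      refine ⟨g, fun A hA => ?_⟩
      rw [hg] at hA
      obtain ⟨i, hi⟩ := hA
      exact ⟨i, hi⟩
  -- the adaptive branch
  set P : ℕ → ℕ → (ℕ → Bool) → Prop :=
    fun i m v => CcAux.tw (CcAux.gelt hT hTne m v) ∈ e i with hP
  set u : ℕ → Bool := CcAux.ustar P with hu
  obtain ⟨xs, hx⟩ := CcAux.exists_xstar hT hTne hK hTK u
  -- the weakly null sequence
  set a : ℕ → C(X, ℝ) := CcAux.aseq hT hTne u with ha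
  set A : ℕ → WeakSpace ℝ C(X, ℝ) := fun j => CcAux.tw (a j) with hA
  have hAt : Filter.Tendsto A Filter.atTop (nhds (0 : WeakSpace ℝ C(X, ℝ))) := by
    apply CcAux.tendsto_weak_zero
    intro L
    exact CcAux.eval_tendsto_zero a (fun j x => CcAux.aseq_bound hT hTne j x)
      (fun j j' hjj x => CcAux.aseq_disjoint hT hTne j j' hjj x) L
  have hCcpt : IsCompact (insert (0 : WeakSpace ℝ C(X, ℝ)) (Set.range A)) :=
    hAt.isCompact_insert_range
  -- the open set
  set ev : WeakSpace ℝ C(X, ℝ) → ℝ :=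
    fun g => (topDualPairing ℝ C(X, ℝ)).flip g (CcAux.evalCLM xs) with hev
  have hevc : Continuous ev := WeakBilin.eval_continuous _ _
  set U : Set (WeakSpace ℝ C(X, ℝ)) := {g | |ev g| < 3 / 4} with hU
  have hUopen : IsOpen U := isOpen_lt (continuous_abs.comp hevc) continuous_const
  have hevA : ∀ j, ev (A j) = a j xs := fun j => rfl
  have hCU : insert (0 : WeakSpace ℝ C(X, ℝ)) (Set.range A) ⊆ U := by
    rintro g (rfl | ⟨j, rfl⟩)
    · have : ev (0 : WeakSpace ℝ C(X, ℝ)) = 0 := by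
        rw [hev]
        simp
        exact (CcAux.evalCLM xs).map_zero
      rw [Set.mem_setOf_eq, this]
      norm_num
    · rw [Set.mem_setOf_eq, hevA j, ha, CcAux.aseq_xstar hT hTne hx j]
      norm_num
  -- apply the k-network property
  obtain ⟨F, hFN, hFfin, hFcov, hFU⟩ := hkn _ U hCcpt hUopen hCU
  have hmem : ∀ j, ∃ S, S ∈ F ∧ A j ∈ S := by
    intro j
    have : A j ∈ ⋃₀ F := hFcov (Set.mem_insert_of_mem _ ⟨j, rfl⟩)
    obtain ⟨S, hSF, hAS⟩ := this
    exact ⟨S, hSF, hAS⟩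
  choose sel hselF hselmem using hmem
  haveI : Finite ↥F := hFfin.to_subtype
  obtain ⟨S₀, hS₀⟩ := Finite.exists_infinite_fiber (fun j => (⟨sel j, hselF j⟩ : F))
  have hJinf : {j : ℕ | sel j = (S₀ : Set (WeakSpace ℝ C(X, ℝ)))}.Infinite := by
    have := Set.infinite_coe_iff.mp hS₀
    apply Set.Infinite.mono ?_ this
    intro j hj
    simp only [Set.mem_preimage, Set.mem_singleton_iff] at hj
    simp only [Set.mem_setOf_eq]
    rw [← hj]
  have hS₀N : (S₀ : Set (WeakSpace ℝ C(X, ℝ))) ∈ N := hFN S₀.2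
  have hS₀U : (S₀ : Set (WeakSpace ℝ C(X, ℝ))) ⊆ U := by
    intro g hg
    exact hFU ⟨S₀, S₀.2, hg⟩
  rw [hNU, Set.mem_iUnion] at hS₀N
  obtain ⟨mI, hmI⟩ := hS₀N
  -- S₀ belongs to the countable family Fam
  have hS₀Fam : (S₀ : Set (WeakSpace ℝ C(X, ℝ))) ∈ Fam := by
    rw [hFam, Set.mem_iUnion]
    refine ⟨mI, hmI, ?_⟩
    have hev2 : A ⁻¹' (V mI) ∈ Filter.atTop := hAt (hVmem mI)
    rw [Filter.mem_atTop_sets] at hev2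
    obtain ⟨N₀, hN₀⟩ := hev2
    obtain ⟨j, hjJ, hjN₀⟩ := hJinf.exists_gt N₀
    refine ⟨A j, ?_, hN₀ j (le_of_lt hjN₀)⟩
    rw [← hjJ]
    exact hselmem j
  obtain ⟨i, hei⟩ := he _ hS₀Fam
  -- dichotomy at stage i
  by_cases hc : CcAux.StCond P i (CcAux.stage P i)
  · -- catch case
    obtain ⟨m, v, hPmv, hvu⟩ := CcAux.stage_pos_spec P i hc
    have hnode : CcAux.nodeB hT hTne m v = CcAux.nodeB hT hTne m u := by
      apply CcAux.nodeB_congr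
      intro n hn
      exact hvu n hn
    have hgelt : CcAux.gelt hT hTne m v = CcAux.gelt hT hTne m u :=
      CcAux.gelt_congr hT hTne m hvu
    rw [hP] at hPmv
    rw [hei, hgelt] at hPmv
    have := hS₀U hPmv
    rw [hU, Set.mem_setOf_eq] at this
    have hv1 : ev (CcAux.tw (CcAux.gelt hT hTne m u)) = CcAux.gelt hT hTne m u xs := rfl
    rw [hv1, CcAux.gelt_xstar hT hTne hx m] at this
    norm_num at this
  · -- avoid case
    have hnot : ∀ j, (CcAux.stage P i).1 ≤ j → A j ∉ (S₀ : Set (WeakSpace ℝ C(X, ℝ))) := by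
      intro j hj hmem'
      apply hc
      refine ⟨j + 1, Function.update u j (!u j), ?_, ?_⟩
      · rw [hP]
        simp only
        rw [hei]
        exact hmem'
      · intro n hn
        have hnj : n < (CcAux.stage P i).1 := lt_of_lt_of_le hn (min_le_right _ _)
        have hnej : n ≠ j := by omega
        rw [Function.update_of_ne hnej]
        exact CcAux.ustar_coh P i hnj
    obtain ⟨j, hjJ, hjgt⟩ := hJinf.exists_gt (CcAux.stage P i).1
    apply hnot j (le_of_lt hjgt)
    rw [← hjJ]
    exact hselmem j
end

section
/- Let X be a Tychonoff (completely regular Hausdorff) space such that every compact subset of X is countable. If C_c(X) endowed with its weak topology σ(E,E′) is a σ-space (in particular, if it is an ℵ-space), then X is separable. -/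
open TopologicalSpace Filter Set

open Topology

variable {X : Type} [TopologicalSpace X]

/-- Evaluation at a point as a continuous linear functional on `C(X,ℝ)`. -/
noncomputable def evalCLM' (x : X) : C(X, ℝ) →L[ℝ] ℝ :=
  ⟨{ toFun := fun f => f x, map_add' := fun f g => rfl, map_smul' := fun t f => rfl },
    continuous_eval_const x⟩

@[simp] lemma evalCLM'_apply (x : X) (f : C(X, ℝ)) : evalCLM' x f = f x := rfl

/-- The identity map from the weak space back to `C(X,ℝ)`. -/
def toCM {X : Type} [TopologicalSpace X] (h : WeakSpace ℝ C(X, ℝ)) : C(X, ℝ) := h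

/-- Every continuous linear functional on `C_c(X)` has compact support. -/
theorem exists_compact_forall (φ : C(X, ℝ) →L[ℝ] ℝ) :
    ∃ K : Set X, IsCompact K ∧ ∀ f : C(X, ℝ), (∀ x ∈ K, f x = 0) → φ f = 0 := by
  have hV : φ ⁻¹' Metric.ball (0 : ℝ) 1 ∈ 𝓝 (0 : C(X, ℝ)) := by
    have h := φ.continuous.continuousAt (x := (0 : C(X, ℝ)))
    have := h.preimage_mem_nhds (t := Metric.ball (0 : ℝ) 1) (by
      rw [map_zero]; exact Metric.ball_mem_nhds _ one_pos)
    exact this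
  rw [nhds_eq_comap_uniformity, Filter.mem_comap] at hV
  obtain ⟨U, hU, hUsub⟩ := hV
  rw [ContinuousMap.hasBasis_compactConvergenceUniformity.mem_iff] at hU
  obtain ⟨⟨K, W⟩, ⟨hKc, hW⟩, hKW⟩ := hU
  refine ⟨K, hKc, fun f hf => ?_⟩
  have key : ∀ t : ℝ, |φ (t • f)| < 1 := by
    intro t
    have hmem : ((0 : C(X, ℝ)), t • f) ∈ U := by
      apply hKW
      intro x hx
      have : (t • f) x = 0 := by
        simp [hf x hx]
      simp only [Set.mem_setOf_eq, ContinuousMap.zero_apply, this]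
      exact refl_mem_uniformity hW
    have : t • f ∈ φ ⁻¹' Metric.ball (0 : ℝ) 1 := hUsub hmem
    simpa [Real.dist_eq, abs_mul] using this
  by_contra hne
  have h1 := key (φ f)⁻¹
  rw [map_smul, smul_eq_mul, abs_mul, abs_inv, inv_mul_cancel₀ (abs_ne_zero.mpr hne)] at h1
  exact lt_irrefl 1 h1

/-- Every weak neighbourhood of `0` contains the common kernel of finitely many functionals. -/
theorem weak_mem_of_forall {V : Set (WeakSpace ℝ C(X, ℝ))}
    (hV : V ∈ 𝓝 (0 : WeakSpace ℝ C(X, ℝ))) :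
    ∃ F : Set (C(X, ℝ) →L[ℝ] ℝ), F.Finite ∧
      ∀ f : WeakSpace ℝ C(X, ℝ), (∀ φ ∈ F, φ (f : C(X, ℝ)) = 0) → f ∈ V := by
  have h : 𝓝 (0 : WeakSpace ℝ C(X, ℝ)) =
      Filter.comap (fun (x : WeakSpace ℝ C(X, ℝ)) (φ : C(X, ℝ) →L[ℝ] ℝ) => φ (x : C(X, ℝ)))
        (𝓝 (fun φ : C(X, ℝ) →L[ℝ] ℝ => φ ((0 : WeakSpace ℝ C(X, ℝ)) : C(X, ℝ)))) :=
    nhds_induced _ _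
  rw [h, Filter.mem_comap] at hV
  obtain ⟨W, hW, hsub⟩ := hV
  rw [nhds_pi, Filter.mem_pi] at hW
  obtain ⟨I, hIfin, t, ht, hpi⟩ := hW
  refine ⟨I, hIfin, fun f hf => ?_⟩
  apply hsub
  show (fun φ : C(X, ℝ) →L[ℝ] ℝ => φ (f : C(X, ℝ))) ∈ W
  apply hpi
  intro φ hφ
  show φ (f : C(X, ℝ)) ∈ t φ
  rw [hf φ hφ]
  have := mem_of_mem_nhds (ht φ)
  have h0 : φ ((0 : WeakSpace ℝ C(X, ℝ)) : C(X, ℝ)) = 0 := map_zero φ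
  simpa [h0] using this


/-- If every compact subset of a Tychonoff space `X` is countable and `C_c(X)` with its weak
topology is a σ-space (has a σ-locally finite network), then `X` is separable. -/
theorem separable_of_cc_weak_sigmaSpace
    (X : Type) [TopologicalSpace X] [T2Space X] [CompletelyRegularSpace X]
    (hc : ∀ K : Set X, IsCompact K → K.Countable)
    (hσ : ∃ N : Set (Set (WeakSpace ℝ C(X, ℝ))), IsSigmaLocallyFinite N ∧ IsNetwork N) :
    TopologicalSpace.SeparableSpace X := by
  classical
  obtain ⟨N, ⟨net, hlf, hNeq⟩, hnet⟩ := hσ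
  -- local finiteness at 0
  choose V hV hfin using fun n => hlf n 0
  -- kernel sets for each V n
  choose F hFfin hFsub using fun n => weak_mem_of_forall (hV n)
  -- compact supports
  choose K hKc hKs using fun φ : C(X, ℝ) →L[ℝ] ℝ => exists_compact_forall φ
  set D0 : Set X := ⋃ n, ⋃ φ ∈ F n, K φ with hD0
  have hD0c : D0.Countable :=
    countable_iUnion fun n => Set.Countable.biUnion (hFfin n).countable fun φ _ => hc _ (hKc φ)
  set Kfam : Set (Set (WeakSpace ℝ C(X, ℝ))) := ⋃ n, {A ∈ net n | (A ∩ V n).Nonempty} with hKfam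
  have hKfamc : Kfam.Countable := countable_iUnion fun n => (hfin n).countable
  set S : Set (WeakSpace ℝ C(X, ℝ)) → Set X :=
    fun A => {y | ∀ h ∈ A, toCM h y > 1 / 2} with hS
  set pick : Set (WeakSpace ℝ C(X, ℝ)) → Set X :=
    fun A => if hA : (S A).Nonempty then {hA.some} else ∅ with hpick
  set D : Set X := D0 ∪ ⋃ A ∈ Kfam, pick A with hD
  have hDc : D.Countable := by
    refine hD0c.union (Set.Countable.biUnion hKfamc fun A _ => ?_)
    by_cases hA : (S A).Nonempty
    · simp [hpick, hA]
    · simp [hpick, hA]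
  have hdense : Dense D := by
    by_contra hnd
    obtain ⟨x, hx⟩ : ∃ x, x ∉ closure D := by
      by_contra hcon
      push_neg at hcon
      exact hnd hcon
    obtain ⟨f, hfc, hfx, hf1⟩ :=
      CompletelyRegularSpace.completely_regular x (closure D) isClosed_closure hx
    set g : C(X, ℝ) := ⟨fun y => 1 - (f y : ℝ),
      continuous_const.sub (continuous_subtype_val.comp hfc)⟩ with hg
    have hgx : g x = 1 := by simp [hg, hfx]
    have hgD : ∀ y ∈ closure D, g y = 0 := by
      intro y hy
      have : f y = 1 := hf1 hy
      simp [hg, this]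
    -- g lies in every V n
    have hgV : ∀ n, (g : WeakSpace ℝ C(X, ℝ)) ∈ V n := by
      intro n
      refine hFsub n g fun φ hφ => hKs φ g fun y hy => ?_
      apply hgD
      apply subset_closure
      exact Or.inl (Set.mem_iUnion.mpr ⟨n, Set.mem_biUnion hφ hy⟩)
    -- the open set {h | h x > 1/2} in the weak topology
    set U : Set (WeakSpace ℝ C(X, ℝ)) :=
      (fun h : WeakSpace ℝ C(X, ℝ) =>
        (topDualPairing ℝ C(X, ℝ)).flip h (evalCLM' x)) ⁻¹' Set.Ioi (1 / 2 : ℝ) with hU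
    have hUopen : IsOpen U :=
      isOpen_Ioi.preimage (WeakBilin.eval_continuous ((topDualPairing ℝ C(X, ℝ)).flip) (evalCLM' x))
    have hgU : (g : WeakSpace ℝ C(X, ℝ)) ∈ U := by
      show (1 / 2 : ℝ) < g x
      rw [hgx]; norm_num
    obtain ⟨A, hAN, hgA, hAU⟩ := hnet (g : WeakSpace ℝ C(X, ℝ)) U hUopen hgU
    rw [hNeq] at hAN
    obtain ⟨n, hAn⟩ := Set.mem_iUnion.mp hAN
    have hAK : A ∈ Kfam := Set.mem_iUnion.mpr ⟨n, ⟨hAn, ⟨g, hgA, hgV n⟩⟩⟩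
    have hxS : x ∈ S A := by
      intro h hh
      have h2 : h ∈ U := hAU hh
      have h3 : (1 / 2 : ℝ) < toCM h x := h2
      exact h3
    have hSA : (S A).Nonempty := ⟨x, hxS⟩
    set s : X := hSA.some with hs
    have hsS : s ∈ S A := hSA.some_mem
    have hsD : s ∈ D := by
      refine Or.inr (Set.mem_biUnion hAK ?_)
      simp [hpick, dif_pos hSA, hs]
    have h1 : g s = 0 := hgD s (subset_closure hsD)
    have h2 : (1 / 2 : ℝ) < g s := hsS (g : WeakSpace ℝ C(X, ℝ)) hgA
    rw [h1] at h2
    norm_num at h2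
  exact ⟨⟨D, hDc, hdense⟩⟩
end

section
/- Let E be a real Banach space containing an isomorphic copy of ℓ_∞ = ℓ_∞(ℕ). Then E endowed with its weak topology σ(E,E′) is not an ℵ-space. -/
open TopologicalSpace Filter Set
open scoped Topology

noncomputable section
namespace AlephAux

abbrev Linf : Type := lp (fun _ : ℕ => ℝ) ⊤

def chi (S : Set ℕ) : Linf :=
  ⟨S.indicator (fun _ => (1:ℝ)), by
    apply memℓp_infty
    refine ⟨1, ?_⟩
    rintro x ⟨i, rfl⟩
    by_cases hi : i ∈ S <;> simp [Set.indicator_apply, hi]⟩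
lemma chi_apply (S : Set ℕ) (i : ℕ) : (chi S : ∀ _ : ℕ, ℝ) i = S.indicator (fun _ => (1:ℝ)) i := rfl
lemma norm_chi_le (S : Set ℕ) : ‖chi S‖ ≤ 1 := by
  apply lp.norm_le_of_forall_le zero_le_one
  intro i
  rw [chi_apply]
  by_cases hi : i ∈ S <;> simp [Set.indicator_apply, hi]
lemma chi_union {S T : Set ℕ} (h : Disjoint S T) : chi (S ∪ T) = chi S + chi T := by
  apply lp.ext
  rw [lp.coeFn_add]
  funext i
  simp only [Pi.add_apply, chi_apply]
  rw [Set.indicator_union_of_disjoint h]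
lemma chi_empty : chi ∅ = 0 := by
  apply lp.ext
  funext i
  simp [chi_apply]
lemma chi_split {H S : Set ℕ} (h : H ⊆ S) : chi S = chi H + chi (S \ H) := by
  rw [← chi_union disjoint_sdiff_right, Set.union_diff_cancel h]
lemma chi_diff {H S : Set ℕ} (h : H ⊆ S) : chi S - chi H = chi (S \ H) := by
  rw [chi_split h]; abel

lemma abs_apply_chi_le (ψ : Linf →L[ℝ] ℝ) (S : Set ℕ) : |ψ (chi S)| ≤ ‖ψ‖ := by
  calc |ψ (chi S)| ≤ ‖ψ‖ * ‖chi S‖ := ψ.le_opNorm _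
  _ ≤ ‖ψ‖ * 1 := by
      exact mul_le_mul_of_nonneg_left (norm_chi_le S) (norm_nonneg _)
  _ = ‖ψ‖ := mul_one _

lemma chi_biUnion_eq_sum (F : Finset ℕ) (S : ℕ → Set ℕ) (P : ℕ → Set ℕ)
    (hS : ∀ i, S i ⊆ P i) (hP : ∀ i j, i ≠ j → Disjoint (P i) (P j)) :
    chi (⋃ i ∈ F, S i) = ∑ i ∈ F, chi (S i) := by
  classical
  induction F using Finset.induction_on with
  | empty => simpa using chi_empty
  | @insert a F ha ih =>
    rw [Finset.sum_insert ha, ← ih]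
    rw [Finset.set_biUnion_insert]
    rw [chi_union]
    apply Set.disjoint_iUnion_right.2
    intro i
    apply Set.disjoint_iUnion_right.2
    intro hi
    exact Set.disjoint_of_subset (hS a) (hS i) (hP a i (by rintro rfl; exact ha hi))

/-- From an infinite reservoir, extract an infinite sub-reservoir on whose subsets all
the functionals in `Φ` are `ε`-small. -/
lemma exists_small_reservoir (Φ : Finset (Linf →L[ℝ] ℝ)) {R : Set ℕ} (hR : R.Infinite)
    {ε : ℝ} (hε : 0 < ε) :
    ∃ R', R' ⊆ R ∧ R'.Infinite ∧ ∀ ψ ∈ Φ, ∀ S ⊆ R', |ψ (chi S)| ≤ ε := by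
  classical
  let e := hR.natEmbedding
  set P : ℕ → Set ℕ := fun i => Set.range (fun k => (e (Nat.pair i k) : ℕ)) with hP
  have hPsub : ∀ i, P i ⊆ R := by rintro i x ⟨k, rfl⟩; exact (e _).2
  have einj : Function.Injective (fun m => (e m : ℕ)) := by
    intro a b hab
    exact e.injective (Subtype.ext hab)
  have hPinf : ∀ i, (P i).Infinite := by
    intro i
    apply Set.infinite_range_of_injective
    intro a b hab
    have := einj hab
    exact (Nat.pair_eq_pair.1 this).2
  have hPdis : ∀ i j, i ≠ j → Disjoint (P i) (P j) := by
    intro i j hij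
    rw [Set.disjoint_iff_inter_eq_empty]
    ext x
    simp only [Set.mem_inter_iff, Set.mem_range, Set.mem_empty_iff_false, iff_false]
    rintro ⟨⟨k, rfl⟩, ⟨l, hl⟩⟩
    exact hij ((Nat.pair_eq_pair.1 (einj hl)).1).symm
  -- each functional has only finitely many "bad" pieces
  have main : ∀ ψ : Linf →L[ℝ] ℝ, {i | ∃ S ⊆ P i, ε < ψ (chi S)}.Finite := by
    intro ψ
    by_contra hfin
    have hfin : {i | ∃ S ⊆ P i, ε < ψ (chi S)}.Infinite := hfin
    obtain ⟨n, hn⟩ : ∃ n : ℕ, ‖ψ‖ < n * ε := by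
      obtain ⟨n, hn⟩ := exists_nat_gt (‖ψ‖ / ε)
      exact ⟨n, (div_lt_iff₀ hε).1 hn⟩
    have hnpos : 0 < n := by
      rcases Nat.eq_zero_or_pos n with rfl | h
      · exfalso; simp only [Nat.cast_zero, zero_mul] at hn
        exact absurd hn (not_lt.2 (norm_nonneg _))
      · exact h
    obtain ⟨F, hFsub, hFcard⟩ := hfin.exists_subset_card_eq n
    let Ssel : ℕ → Set ℕ := fun i =>
      if h : ∃ S ⊆ P i, ε < ψ (chi S) then h.choose else ∅
    have hSsub : ∀ i, Ssel i ⊆ P i := by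
      intro i
      by_cases h : ∃ S ⊆ P i, ε < ψ (chi S)
      · simp only [Ssel]; rw [dif_pos h]; exact h.choose_spec.1
      · simp only [Ssel]; rw [dif_neg h]; exact Set.empty_subset _
    have hSgood : ∀ i ∈ F, ε < ψ (chi (Ssel i)) := by
      intro i hi
      have h : ∃ S ⊆ P i, ε < ψ (chi S) := hFsub hi
      simp only [Ssel]; rw [dif_pos h]
      exact h.choose_spec.2
    have hsum : ψ (chi (⋃ i ∈ F, Ssel i)) = ∑ i ∈ F, ψ (chi (Ssel i)) := by
      rw [chi_biUnion_eq_sum F Ssel P hSsub hPdis, map_sum]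
    have hlt : (n : ℝ) * ε < ψ (chi (⋃ i ∈ F, Ssel i)) := by
      rw [hsum]
      calc (n : ℝ) * ε = ∑ _i ∈ F, ε := by rw [Finset.sum_const, hFcard, nsmul_eq_mul]
      _ < ∑ i ∈ F, ψ (chi (Ssel i)) := by
          apply Finset.sum_lt_sum_of_nonempty
          · rw [← Finset.card_pos, hFcard]
            exact hnpos
          · exact hSgood
    have := (abs_apply_chi_le ψ (⋃ i ∈ F, Ssel i))
    have h2 : ψ (chi (⋃ i ∈ F, Ssel i)) ≤ ‖ψ‖ := (le_abs_self _).trans this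
    linarith
  -- combine
  have badfin : (⋃ ψ ∈ Φ, ({i | ∃ S ⊆ P i, ε < ψ (chi S)} ∪
      {i | ∃ S ⊆ P i, ε < (-ψ) (chi S)})).Finite := by
    apply Set.Finite.biUnion Φ.finite_toSet
    intro ψ _
    exact (main ψ).union (main (-ψ))
  obtain ⟨i, hi⟩ := (badfin.infinite_compl).nonempty
  refine ⟨P i, hPsub i, hPinf i, ?_⟩
  intro ψ hψ S hS
  rw [abs_le]
  constructor
  · by_contra hcon
    push_neg at hcon
    apply hi
    refine Set.mem_biUnion hψ ?_
    refine Set.mem_union_right _ ⟨S, hS, ?_⟩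
    simp only [ContinuousLinearMap.neg_apply]
    linarith
  · by_contra hcon
    push_neg at hcon
    apply hi
    exact Set.mem_biUnion hψ (Set.mem_union_left _ ⟨S, hS, hcon⟩)


/-- the subspace of sequences tending to `0`. -/
def c0 : Submodule ℝ Linf where
  carrier := {x | Tendsto (fun n => (x : ∀ _ : ℕ, ℝ) n) atTop (𝓝 0)}
  add_mem' := by
    intro a b ha hb
    have := ha.add hb
    simp only [add_zero] at this
    refine this.congr ?_
    intro n
    rw [lp.coeFn_add]
    rfl
  zero_mem' := by
    have : (fun n => ((0 : Linf) : ∀ _ : ℕ, ℝ) n) = fun _ => (0:ℝ) := by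
      funext n; rw [lp.coeFn_zero]; rfl
    rw [Set.mem_setOf_eq, this]
    exact tendsto_const_nhds
  smul_mem' := by
    intro c x hx
    have := hx.const_mul c
    simp only [mul_zero] at this
    refine this.congr ?_
    intro n
    rw [lp.coeFn_smul]
    simp [Pi.smul_apply, smul_eq_mul]

lemma mem_c0_iff {x : Linf} :
    x ∈ c0 ↔ Tendsto (fun n => (x : ∀ _ : ℕ, ℝ) n) atTop (𝓝 (0:ℝ)) := Iff.rfl

lemma isClosed_c0 : IsClosed (c0 : Set Linf) := by
  apply isClosed_of_closure_subset
  intro x hx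
  rw [SetLike.mem_coe, mem_c0_iff, NormedAddCommGroup.tendsto_nhds_zero]
  intro ε hε
  obtain ⟨y, hy, hxy⟩ := Metric.mem_closure_iff.1 hx (ε/2) (by linarith)
  rw [SetLike.mem_coe, mem_c0_iff, NormedAddCommGroup.tendsto_nhds_zero] at hy
  filter_upwards [hy (ε/2) (by linarith)] with n hn
  have h1 : ‖(x : ∀ _ : ℕ, ℝ) n - (y : ∀ _ : ℕ, ℝ) n‖ ≤ dist x y := by
    have h2 : ‖((x - y : Linf) : ∀ _ : ℕ, ℝ) n‖ ≤ ‖x - y‖ :=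
      lp.norm_apply_le_norm (by norm_num) (x - y) n
    rw [lp.coeFn_sub] at h2
    rw [dist_eq_norm]
    exact h2
  calc ‖(x : ∀ _ : ℕ, ℝ) n‖ ≤ ‖(x : ∀ _ : ℕ, ℝ) n - (y : ∀ _ : ℕ, ℝ) n‖ + ‖(y : ∀ _ : ℕ, ℝ) n‖ := by
        have := norm_add_le ((x : ∀ _ : ℕ, ℝ) n - (y : ∀ _ : ℕ, ℝ) n) ((y : ∀ _ : ℕ, ℝ) n)
        simpa using this
  _ < ε := by linarith [hxy]


lemma chi_finset_mem_c0 (H : Finset ℕ) : chi (↑H : Set ℕ) ∈ c0 := by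
  rw [mem_c0_iff]
  apply Tendsto.congr' (f₁ := fun _ => (0:ℝ))
  · rw [Filter.EventuallyEq, eventually_atTop]
    refine ⟨(H.sup id) + 1, ?_⟩
    intro n hn
    rw [chi_apply, Set.indicator_of_notMem]
    intro hmem
    have : n ≤ H.sup id := Finset.le_sup (f := id) (by exact_mod_cast hmem)
    omega
  · exact tendsto_const_nhds

lemma chi_not_mem_c0 {A : Set ℕ} (hA : A.Infinite) : chi A ∉ c0 := by
  rw [mem_c0_iff, NormedAddCommGroup.tendsto_nhds_zero]
  intro hcon
  obtain ⟨N, hN⟩ := eventually_atTop.1 (hcon 1 one_pos)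
  obtain ⟨n, hnA, hn⟩ := hA.exists_gt N
  have := hN n (le_of_lt hn)
  rw [chi_apply, Set.indicator_of_mem hnA] at this
  norm_num at this

section Image
variable {E : Type} [NormedAddCommGroup E] [NormedSpace ℝ E] [CompleteSpace E]

lemma weak_eval_continuous (f : E →L[ℝ] ℝ) : Continuous fun y : WeakSpace ℝ E => f y :=
  WeakBilin.eval_continuous (topDualPairing ℝ E).flip f

lemma tinj (T : Linf →L[ℝ] E) {c : ℝ} (hc : 0 < c) (hT : ∀ x : Linf, c * ‖x‖ ≤ ‖T x‖) :
    Function.Injective T := by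
  intro x y hxy
  have h1 : c * ‖x - y‖ ≤ ‖T (x - y)‖ := hT _
  rw [map_sub, hxy, sub_self, norm_zero] at h1
  have h2 : ‖x - y‖ = 0 := le_antisymm (by nlinarith [norm_nonneg (x - y)]) (norm_nonneg _)
  exact sub_eq_zero.1 (norm_eq_zero.1 h2)

lemma isClosed_image_c0 (T : Linf →L[ℝ] E) {c : ℝ} (hc : 0 < c)
    (hT : ∀ x : Linf, c * ‖x‖ ≤ ‖T x‖) : IsClosed (T '' (c0 : Set Linf)) := by
  haveI : CompleteSpace (c0 : Submodule ℝ Linf) := isClosed_c0.isComplete.completeSpace_coe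
  set Tc : (c0 : Submodule ℝ Linf) →L[ℝ] E := T.comp (Submodule.subtypeL c0) with hTc
  have hrange : Set.range Tc = T '' (c0 : Set Linf) := by
    ext y
    constructor
    · rintro ⟨⟨x, hx⟩, rfl⟩; exact ⟨x, hx, rfl⟩
    · rintro ⟨x, hx, rfl⟩; exact ⟨⟨x, hx⟩, rfl⟩
  rw [← hrange]
  have hanti : AntilipschitzWith (⟨c, hc.le⟩ : NNReal)⁻¹ Tc := by
    apply AntilipschitzWith.of_le_mul_dist
    intro x y
    have h1 : c * ‖(x : Linf) - (y : Linf)‖ ≤ ‖T ((x : Linf) - (y : Linf))‖ := hT _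
    rw [dist_eq_norm, dist_eq_norm]
    have hxy : ‖x - y‖ = ‖(x : Linf) - (y : Linf)‖ := rfl
    have hT2 : ‖Tc x - Tc y‖ = ‖T ((x : Linf) - (y : Linf))‖ := by
      rw [hTc]; simp [map_sub]
    rw [hxy, hT2]
    show _ ≤ c⁻¹ * _
    rw [le_inv_mul_iff₀ hc]
    exact h1
  exact hanti.isClosed_range Tc.uniformContinuous

/-- the image of `c0` is weakly closed. -/
lemma isClosed_weak_image_c0 (T : Linf →L[ℝ] E) {c : ℝ} (hc : 0 < c)
    (hT : ∀ x : Linf, c * ‖x‖ ≤ ‖T x‖) :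
    IsClosed (T '' (c0 : Set Linf) : Set (WeakSpace ℝ E)) := by
  rw [← isOpen_compl_iff]
  rw [isOpen_iff_mem_nhds]
  intro x hx
  have hconv : Convex ℝ (T '' (c0 : Set Linf)) := by
    have : T '' (c0 : Set Linf) = ((c0.map (T : Linf →ₗ[ℝ] E)) : Set E) := by
      simp [Submodule.map_coe]
    rw [this]
    exact (c0.map (T : Linf →ₗ[ℝ] E)).convex
  have hxE : (x : E) ∉ T '' (c0 : Set Linf) := hx
  obtain ⟨f, u, hfu, hu⟩ := geometric_hahn_banach_closed_point hconv
    (isClosed_image_c0 T hc hT) hxE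
  have hopen : IsOpen {y : WeakSpace ℝ E | u < f y} :=
    isOpen_lt continuous_const (weak_eval_continuous f)
  apply Filter.mem_of_superset (hopen.mem_nhds (show u < f x from hu))
  intro y hy hyim
  exact absurd (hfu y hyim) (not_lt.2 (le_of_lt hy))

end Image

section Weak
variable {E : Type} [NormedAddCommGroup E] [NormedSpace ℝ E]

lemma weak_basic {U : Set (WeakSpace ℝ E)} (hU : IsOpen U) {x : WeakSpace ℝ E} (hx : x ∈ U) :
    ∃ (Φ : Finset (E →L[ℝ] ℝ)) (ε : ℝ), 0 < ε ∧
      ∀ y : WeakSpace ℝ E, (∀ f ∈ Φ, |f y - f x| < ε) → y ∈ U := by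
  classical
  obtain ⟨V, hV, hVU⟩ := isOpen_induced_iff.1 hU
  have hxV : (fun (z : WeakSpace ℝ E) (g : E →L[ℝ] ℝ) => g z) x ∈ V := by
    rw [← hVU] at hx; exact hx
  obtain ⟨I, u, hu, hsub⟩ := isOpen_pi_iff.1 hV _ hxV
  have hball : ∀ g ∈ I, ∃ δ : ℝ, 0 < δ ∧ Metric.ball (g x) δ ⊆ u g := by
    intro g hg
    obtain ⟨δ, hδ, hb⟩ := Metric.isOpen_iff.1 (hu g hg).1 _ (hu g hg).2
    exact ⟨δ, hδ, hb⟩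
  choose δf hδf hbf using hball
  by_cases hI : I.Nonempty
  · set ε := I.attach.inf' (by simpa using hI) (fun g => δf g.1 g.2) with hε
    have hεpos : 0 < ε := by
      rw [hε]
      apply Finset.lt_inf'_iff _ |>.2
      intro g _
      exact hδf g.1 g.2
    refine ⟨I, ε, hεpos, ?_⟩
    intro y hy
    rw [← hVU]
    apply hsub
    intro g hg
    apply hbf g hg
    rw [Metric.mem_ball, Real.dist_eq]
    have h1 : |g y - g x| < ε := hy g hg
    have h2 : ε ≤ δf g hg := by
      rw [hε]
      exact Finset.inf'_le _ (Finset.mem_attach _ ⟨g, hg⟩)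
    show |g y - g x| < δf g hg
    linarith
  · refine ⟨∅, 1, one_pos, ?_⟩
    intro y _
    rw [← hVU]
    apply hsub
    intro g hg
    rw [Finset.not_nonempty_iff_eq_empty.1 hI] at hg
    simp at hg

lemma key_step (T : Linf →L[ℝ] E) {W : Set (WeakSpace ℝ E)} (hWo : IsOpen W)
    (H : Finset ℕ) (hHW : T (chi ↑H) ∈ W) {R : Set ℕ} (hR : R.Infinite) :
    ∃ (a : ℕ) (R' : Set ℕ), a ∈ R ∧ R' ⊆ R ∧ R'.Infinite ∧ a ∉ R' ∧
      ∀ S : Set ℕ, ↑H ⊆ S → S ⊆ ↑H ∪ insert a R' → T (chi S) ∈ W := by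
  classical
  obtain ⟨Φ, ε, hε, hbasic⟩ := weak_basic hWo hHW
  obtain ⟨R'', hsub, hinf, hsmall⟩ :=
    exists_small_reservoir (Φ.image (fun f => f.comp T)) hR (half_pos hε)
  obtain ⟨a, ha⟩ := hinf.nonempty
  refine ⟨a, R'' \ {a}, hsub ha, (Set.diff_subset).trans hsub,
    hinf.diff (Set.finite_singleton a), (by simp), ?_⟩
  intro S hHS hSsub
  apply hbasic
  intro f hf
  have hS' : S \ ↑H ⊆ R'' := by
    intro y hy
    rcases hSsub hy.1 with h | h
    · exact absurd h hy.2
    · rcases h with h | h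
      · rw [h]; exact ha
      · exact h.1
  have hval : f (T (chi S)) - f (T (chi ↑H)) = (f.comp T) (chi (S \ ↑H)) := by
    rw [ContinuousLinearMap.comp_apply, ← chi_diff hHS, map_sub, map_sub]
  rw [hval]
  have := hsmall (f.comp T) (Finset.mem_image_of_mem _ hf) (S \ ↑H) hS'
  calc |(f.comp T) (chi (S \ ↑H))| ≤ ε / 2 := this
  _ < ε := by linarith

lemma exists_infinite_chi_mem (T : Linf →L[ℝ] E) (W : ℕ → Set (WeakSpace ℝ E))
    (hWo : ∀ n, IsOpen (W n)) (hWH : ∀ n (H : Finset ℕ), T (chi ↑H) ∈ W n) :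
    ∃ A : Set ℕ, A.Infinite ∧ ∀ n, T (chi A) ∈ W n := by
  classical
  have key : ∀ (n : ℕ) (H : Finset ℕ) (R : {R : Set ℕ // R.Infinite}),
      ∃ p : ℕ × {R : Set ℕ // R.Infinite}, p.1 ∈ R.1 ∧ p.2.1 ⊆ R.1 ∧ p.1 ∉ p.2.1 ∧
        ∀ S : Set ℕ, ↑H ⊆ S → S ⊆ ↑H ∪ insert p.1 p.2.1 → T (chi S) ∈ W n := by
    intro n H R
    obtain ⟨a, R', ha, hsub, hinf, hnot, hgood⟩ := key_step T (hWo n) H (hWH n H) R.2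
    exact ⟨(a, ⟨R', hinf⟩), ha, hsub, hnot, hgood⟩
  choose step hstep1 hstep2 hstep3 hstep4 using key
  let st : ℕ → Finset ℕ × {R : Set ℕ // R.Infinite} := fun n =>
    Nat.rec ((∅ : Finset ℕ), ⟨Set.univ, Set.infinite_univ⟩)
      (fun n s => ((insert (step n s.1 s.2).1 s.1), (step n s.1 s.2).2)) n
  have hst : ∀ n, st (n+1) = ((insert (step n (st n).1 (st n).2).1 (st n).1),
      (step n (st n).1 (st n).2).2) := fun n => rfl
  set a : ℕ → ℕ := fun n => (step n (st n).1 (st n).2).1 with haa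
  set Rs : ℕ → Set ℕ := fun n => ((st n).2 : Set ℕ) with hRs
  have hRdec : ∀ n, Rs (n+1) ⊆ Rs n := fun n => hstep2 n (st n).1 (st n).2
  have hRchain : ∀ n m, n ≤ m → Rs m ⊆ Rs n := by
    intro n m hnm
    induction m with
    | zero => rw [Nat.le_zero.1 hnm]
    | succ m ih =>
      rcases Nat.lt_or_ge n (m+1) with h | h
      · exact (hRdec m).trans (ih (by omega))
      · rw [Nat.le_antisymm hnm h]
  have ha_mem : ∀ n, a n ∈ Rs n := fun n => hstep1 n (st n).1 (st n).2
  have ha_not : ∀ n, a n ∉ Rs (n+1) := fun n => hstep3 n (st n).1 (st n).2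
  have hmono : ∀ m n, m ≤ n → (st m).1 ⊆ (st n).1 := by
    intro m n hmn
    induction n with
    | zero => rw [Nat.le_zero.1 hmn]
    | succ n ih =>
      rcases Nat.lt_or_ge m (n+1) with h | h
      · refine (ih (by omega)).trans ?_
        rw [hst n]
        exact Finset.subset_insert _ _
      · rw [Nat.le_antisymm hmn h]
  have hdisj : ∀ n, ∀ i ∈ (st n).1, i ∉ Rs n := by
    intro n
    induction n with
    | zero => intro i hi; simp only [st] at hi; exact absurd hi (Finset.notMem_empty i)
    | succ n ih =>
      intro i hi
      rw [hst n] at hi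
      rcases Finset.mem_insert.1 hi with h | h
      · rw [h]; exact ha_not n
      · intro hcon; exact ih i h (hRdec n hcon)
  set A : Set ℕ := ⋃ n, ((st n).1 : Set ℕ) with hA
  have hHsubA : ∀ n, ((st n).1 : Set ℕ) ⊆ A := fun n => Set.subset_iUnion (fun n => ((st n).1 : Set ℕ)) n
  have hAsub : ∀ n, A ⊆ ↑(st n).1 ∪ insert (a n) (Rs (n+1)) := by
    intro n
    apply Set.iUnion_subset
    intro m
    induction m with
    | zero => intro y hy; simp only [st] at hy; simp at hy
    | succ m ih =>
      rw [hst m]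
      intro y hy
      rcases Finset.mem_insert.1 (by exact_mod_cast hy) with h | h
      · -- y = a m
        subst h
        rcases Nat.lt_trichotomy m n with hc | hc | hc
        · left
          have : (a m) ∈ ((st (m+1)).1 : Finset ℕ) := by
            rw [hst m]; exact Finset.mem_insert_self _ _
          exact_mod_cast (hmono (m+1) n (by omega)) this
        · subst hc
          right; exact Set.mem_insert _ _
        · right; right
          exact hRchain (n+1) m (by omega) (ha_mem m)
      · exact ih (by exact_mod_cast h)
  have hcard : ∀ n, (st n).1.card = n := by
    intro n
    induction n with
    | zero => rfl
    | succ n ih =>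
      rw [hst n]
      rw [Finset.card_insert_of_notMem, ih]
      intro hcon
      exact hdisj n _ hcon (ha_mem n)
  have hAinf : A.Infinite := by
    intro hfin
    have h1 : ∀ n, ((st n).1 : Finset ℕ) ⊆ hfin.toFinset := by
      intro n
      intro i hi
      rw [Set.Finite.mem_toFinset]
      exact hHsubA n (by exact_mod_cast hi)
    have h2 := Finset.card_le_card (h1 (hfin.toFinset.card + 1))
    have h3 := hcard (hfin.toFinset.card + 1)
    omega
  refine ⟨A, hAinf, ?_⟩
  intro n
  exact hstep4 n (st n).1 (st n).2 A (hHsubA n) (hAsub n)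

end Weak

/-- In an ℵ-space, every closed set is a Gδ set. -/
lemma exists_gdelta {X : Type*} [TopologicalSpace X] (hX : IsAlephSpace X)
    {C : Set X} (hC : IsClosed C) :
    ∃ W : ℕ → Set X, (∀ n, IsOpen (W n)) ∧ (∀ n, C ⊆ W n) ∧ (⋂ n, W n) ⊆ C := by
  classical
  obtain ⟨hreg, hT2, N, ⟨f, hlf, hNf⟩, hkn⟩ := hX
  -- the union of closures of members of `f ℓ` whose closure misses `C`
  set G : ℕ → Set X := fun ℓ =>
    ⋃ i : ↥(f ℓ), (if closure (i : Set X) ∩ C = ∅ then closure (i : Set X) else ∅) with hG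
  have hGclosed : ∀ ℓ, IsClosed (G ℓ) := by
    intro ℓ
    apply LocallyFinite.isClosed_iUnion
    · -- local finiteness
      intro x
      obtain ⟨V, hV, hfin⟩ := hlf ℓ x
      refine ⟨interior V, interior_mem_nhds.2 hV, ?_⟩
      have hsub : {i : ↥(f ℓ) |
          ((if closure (i : Set X) ∩ C = ∅ then closure (i : Set X) else ∅) ∩ interior V).Nonempty}
          ⊆ (fun i : ↥(f ℓ) => (i : Set X)) ⁻¹' {A ∈ f ℓ | (A ∩ V).Nonempty} := by
        rintro i ⟨y, hy1, hy2⟩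
        by_cases hcase : closure (i : Set X) ∩ C = ∅
        · rw [if_pos hcase] at hy1
          -- y ∈ closure i ∩ interior V, interior V open, so i meets interior V ⊆ V
          have : ((i : Set X) ∩ interior V).Nonempty := by
            have := mem_closure_iff.1 hy1 (interior V) isOpen_interior hy2
            exact this.imp (fun z hz => ⟨hz.2, hz.1⟩)
          refine ⟨i.2, ?_⟩
          obtain ⟨z, hz1, hz2⟩ := this
          exact ⟨z, hz1, interior_subset hz2⟩
        · rw [if_neg hcase] at hy1
          simp at hy1
      apply Set.Finite.subset _ hsub
      exact Set.Finite.preimage (Set.injOn_of_injective Subtype.val_injective) hfin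
    · intro i
      by_cases hcase : closure (i : Set X) ∩ C = ∅
      · rw [if_pos hcase]; exact isClosed_closure
      · rw [if_neg hcase]; exact isClosed_empty
  refine ⟨fun ℓ => (G ℓ)ᶜ, fun ℓ => (hGclosed ℓ).isOpen_compl, ?_, ?_⟩
  · -- C ⊆ complement of G ℓ
    intro ℓ x hx hxG
    obtain ⟨i, hi⟩ := Set.mem_iUnion.1 hxG
    by_cases hcase : closure (i : Set X) ∩ C = ∅
    · rw [if_pos hcase] at hi
      have : x ∈ closure (i : Set X) ∩ C := ⟨hi, hx⟩
      rw [hcase] at this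
      exact this
    · rw [if_neg hcase] at hi
      exact hi
  · -- intersection is contained in C
    intro x hx
    by_contra hxC
    have hU : Cᶜ ∈ 𝓝 x := hC.isOpen_compl.mem_nhds hxC
    obtain ⟨S, hSnhds, hSclosed, hSsub⟩ := exists_mem_nhds_isClosed_subset hU
    obtain ⟨F, hFN, hFfin, hFcov, hFsub⟩ := hkn {x} (interior S) isCompact_singleton
      isOpen_interior (by rw [Set.singleton_subset_iff]; exact mem_interior_iff_mem_nhds.2 hSnhds)
    obtain ⟨A, hAF, hxA⟩ := hFcov rfl
    have hAN : A ∈ N := hFN hAF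
    rw [hNf] at hAN
    obtain ⟨ℓ, hℓ⟩ := Set.mem_iUnion.1 hAN
    have hclA : closure A ∩ C = ∅ := by
      have h1 : A ⊆ interior S := fun y hy => hFsub ⟨A, hAF, hy⟩
      have h2 : closure A ⊆ S := by
        calc closure A ⊆ closure (interior S) := closure_mono h1
        _ ⊆ closure S := closure_mono interior_subset
        _ = S := hSclosed.closure_eq
      rw [Set.eq_empty_iff_forall_notMem]
      rintro y ⟨hy1, hy2⟩
      exact hSsub (h2 hy1) hy2
    have hxG : x ∈ G ℓ := by
      apply Set.mem_iUnion.2 ⟨⟨A, hℓ⟩, ?_⟩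
      rw [if_pos hclA]
      exact subset_closure hxA
    exact (Set.mem_iInter.1 hx ℓ) hxG


end AlephAux

end
/-- A real Banach space containing an isomorphic copy of `ℓ_∞(ℕ)` is not an ℵ-space in its
weak topology. -/
theorem banach_with_ellInfty_copy_weak_not_aleph
    (E : Type) [NormedAddCommGroup E] [NormedSpace ℝ E] [CompleteSpace E]
    (h : ∃ (T : lp (fun _ : ℕ => ℝ) ⊤ →L[ℝ] E) (c : ℝ), 0 < c ∧
        ∀ x : lp (fun _ : ℕ => ℝ) ⊤, c * ‖x‖ ≤ ‖T x‖) :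
    ¬ IsAlephSpace (WeakSpace ℝ E) := by
  rintro hA
  obtain ⟨T, c, hc, hT⟩ := h
  have hinj : Function.Injective T := AlephAux.tinj T hc hT
  have hclosed : IsClosed ((T '' (AlephAux.c0 : Set AlephAux.Linf)) : Set (WeakSpace ℝ E)) :=
    AlephAux.isClosed_weak_image_c0 T hc hT
  obtain ⟨W, hWo, hWC, hWint⟩ := AlephAux.exists_gdelta hA hclosed
  obtain ⟨A, hAinf, hAmem⟩ := AlephAux.exists_infinite_chi_mem T W hWo
    (fun n H => hWC n ⟨AlephAux.chi ↑H, AlephAux.chi_finset_mem_c0 H, rfl⟩)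
  have hmem : T (AlephAux.chi A) ∈ T '' (AlephAux.c0 : Set AlephAux.Linf) :=
    hWint (Set.mem_iInter.2 hAmem)
  obtain ⟨u, hu, huT⟩ := hmem
  rw [hinj huT] at hu
  exact AlephAux.chi_not_mem_c0 hAinf hu
end
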